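/- Let A be a unital pro-C*-algebra and let a ∈ A be normal (a*a = aa*). Then ‖a‖_∞ = r_A(a) as elements of [0,∞], where ‖a‖_∞ = sup_{p ∈ 𝒩(A)} p(a) and r_A(a) = sup{|λ| : λ ∈ sp_A(a)} is the spectral radius. In particular, a normal element is bounded if and only if it is spectrally bounded. -/

import Mathlib

open scoped ENNReal

def IsCStarSeminorm {A : Type*} [Ring A] [StarRing A] [Algebra ℂ A] (p : A → ℝ) : Prop :=
  (∀ a, 0 ≤ p a) ∧ (∀ a b, p (a + b) ≤ p a + p b) ∧
    (∀ (c : ℂ) (a : A), p (c • a) = ‖c‖ * p a) ∧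
    (∀ a b, p (a * b) ≤ p a * p b) ∧ (∀ a, p (star a * a) = p a ^ 2)

def contCStarSeminorms (A : Type*) [TopologicalSpace A] [Ring A] [StarRing A] [Algebra ℂ A] :
    Set (A → ℝ) :=
  {p | IsCStarSeminorm p ∧ Continuous p}

class ProCStarAlgebra (A : Type*) [UniformSpace A] [Ring A] [StarRing A] [Algebra ℂ A] :
    Prop where
  t2 : T2Space A
  complete : CompleteSpace A
  topologicalRing : IsTopologicalRing A
  continuousStar : ContinuousStar A
  uniformAddGroup : IsUniformAddGroup A
  mem_nhds_zero : ∀ s : Set A, s ∈ nhds (0 : A) ↔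
    ∃ p ∈ contCStarSeminorms A, ∃ ε : ℝ, 0 < ε ∧ {a : A | p a < ε} ⊆ s

noncomputable def uniformNorm (A : Type*) [UniformSpace A] [Ring A] [StarRing A] [Algebra ℂ A]
    (a : A) : ℝ≥0∞ :=
  ⨆ p ∈ contCStarSeminorms A, ENNReal.ofReal (p a)

def boundedElems (A : Type*) [UniformSpace A] [Ring A] [StarRing A] [Algebra ℂ A] : Set A :=
  {a | uniformNorm A a < ⊤}

def expSet (A : Type*) [UniformSpace A] [Ring A] [StarRing A] [Algebra ℂ A] : Set A :=
  {w | ∃ (n : ℕ) (a e : Fin n → A),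
    (∀ j, star (a j) = a j) ∧
    (∀ j, HasSum (fun k : ℕ => ((Complex.I ^ k / (k.factorial : ℂ)) • a j ^ k)) (e j)) ∧
    w = (List.ofFn e).prod}

namespace Stmt12Aux

open UniformSpace Filter

/-- A bundled C*-seminorm. -/
structure CSN (A : Type*) [Ring A] [StarRing A] [Algebra ℂ A] : Type _ where
  protected p : A → ℝ
  nonneg : ∀ a, 0 ≤ p a
  add_le : ∀ a b, p (a + b) ≤ p a + p b
  smul_eq : ∀ (c : ℂ) (a : A), p (c • a) = ‖c‖ * p a
  mul_le : ∀ a b, p (a * b) ≤ p a * p b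
  cstar : ∀ a, p (star a * a) = p a ^ 2

variable {A : Type*} [Ring A] [StarRing A] [Algebra ℂ A] (q : CSN A)

lemma CSN.p_zero : q.p 0 = 0 := by
  have := q.smul_eq 0 0
  simpa using this

lemma CSN.p_neg (a : A) : q.p (-a) = q.p a := by
  have := q.smul_eq (-1) a
  simpa using this

lemma CSN.p_star (a : A) : q.p (star a) = q.p a := by
  have h1 : q.p a ^ 2 ≤ q.p (star a) * q.p a := (q.cstar a) ▸ q.mul_le (star a) a
  have h2 : q.p (star a) ^ 2 ≤ q.p a * q.p (star a) := by
    have := q.cstar (star a)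
    rw [star_star] at this
    exact this ▸ q.mul_le a (star a)
  have ha := q.nonneg a
  have hsa := q.nonneg (star a)
  nlinarith

lemma CSN.p_one_le : q.p 1 ≤ 1 := by
  have := q.cstar 1
  rw [star_one, one_mul] at this
  nlinarith [q.nonneg 1]

lemma CSN.p_pow_le (a : A) : ∀ n : ℕ, 1 ≤ n → q.p (a ^ n) ≤ q.p a ^ n := by
  intro n hn
  induction n with
  | zero => omega
  | succ n ih =>
    rcases Nat.eq_or_lt_of_le hn with h | h
    · simp [← h]
    · have hn' : 1 ≤ n := by omega
      calc q.p (a ^ (n + 1)) = q.p (a ^ n * a) := by rw [pow_succ]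
        _ ≤ q.p (a ^ n) * q.p a := q.mul_le _ _
        _ ≤ q.p a ^ n * q.p a := by
            have := ih hn'
            nlinarith [q.nonneg a, q.nonneg (a ^ n)]
        _ = q.p a ^ (n + 1) := by rw [pow_succ]

lemma CSN.p_sum_le {ι : Type*} (s : Finset ι) (f : ι → A) :
    q.p (∑ i ∈ s, f i) ≤ ∑ i ∈ s, q.p (f i) := by
  classical
  induction s using Finset.cons_induction with
  | empty => simp [q.p_zero]
  | cons i s his ih =>
    rw [Finset.sum_cons, Finset.sum_cons]
    exact (q.add_le _ _).trans (by linarith)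

/-- Type synonym for `A` equipped with the seminorm `q.p`. -/
def CSN.Carrier {A : Type*} [Ring A] [StarRing A] [Algebra ℂ A] (_q : CSN A) : Type _ := A

instance : Ring q.Carrier := inferInstanceAs (Ring A)
instance : StarRing q.Carrier := inferInstanceAs (StarRing A)
instance : Algebra ℂ q.Carrier := inferInstanceAs (Algebra ℂ A)

noncomputable instance : SeminormedRing q.Carrier :=
  { (inferInstanceAs (Ring q.Carrier) : Ring q.Carrier),
    AddGroupSeminorm.toSeminormedAddCommGroup
      { toFun := fun a : q.Carrier => q.p a
        map_zero' := q.p_zero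
        add_le' := q.add_le
        neg' := q.p_neg } with
    norm_mul_le := q.mul_le }

lemma CSN.norm_def (a : q.Carrier) : ‖a‖ = q.p a := rfl

noncomputable instance : NormedAlgebra ℂ q.Carrier :=
  { (inferInstanceAs (Algebra ℂ q.Carrier) : Algebra ℂ q.Carrier) with
    norm_smul_le := fun c x => le_of_eq (q.smul_eq c x) }

lemma CSN.uniformContinuous_star : UniformContinuous (star : q.Carrier → q.Carrier) := by
  refine (LipschitzWith.of_dist_le_mul (K := 1) fun x y => ?_).uniformContinuous
  rw [dist_eq_norm, dist_eq_norm, NNReal.coe_one, one_mul, ← star_sub]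
  exact le_of_eq (q.p_star _)

noncomputable instance : StarRing (Completion q.Carrier) :=
  { star := Completion.map (star : q.Carrier → q.Carrier)
    star_involutive := fun x => by
      refine Completion.induction_on x
        (isClosed_eq (Completion.continuous_map.comp Completion.continuous_map) continuous_id)
        fun b => ?_
      show Completion.map star (Completion.map star ((b : q.Carrier) : Completion q.Carrier))
        = ((b : q.Carrier) : Completion q.Carrier)
      rw [Completion.map_coe q.uniformContinuous_star,
        Completion.map_coe q.uniformContinuous_star, star_star]
    star_mul := fun x y => by
      refine Completion.induction_on₂ x y
        (isClosed_eq (Completion.continuous_map.comp continuous_mul)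
          (Continuous.mul (M := Completion q.Carrier)
            (f := fun x : Completion q.Carrier × Completion q.Carrier => Completion.map star x.2)
            (g := fun x : Completion q.Carrier × Completion q.Carrier => Completion.map star x.1)
            (Completion.continuous_map.comp continuous_snd)
            (Completion.continuous_map.comp continuous_fst)))
        fun b c => ?_
      show Completion.map star
          (((b : q.Carrier) : Completion q.Carrier) * ((c : q.Carrier) : Completion q.Carrier))
        = Completion.map star ((c : q.Carrier) : Completion q.Carrier) *
          Completion.map star ((b : q.Carrier) : Completion q.Carrier)
      rw [← Completion.coe_mul, Completion.map_coe q.uniformContinuous_star,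
        Completion.map_coe q.uniformContinuous_star,
        Completion.map_coe q.uniformContinuous_star, star_mul, Completion.coe_mul]
    star_add := fun x y => by
      refine Completion.induction_on₂ x y
        (isClosed_eq (Completion.continuous_map.comp continuous_add)
          (Continuous.add (M := Completion q.Carrier)
            (f := fun x : Completion q.Carrier × Completion q.Carrier => Completion.map star x.1)
            (g := fun x : Completion q.Carrier × Completion q.Carrier => Completion.map star x.2)
            (Completion.continuous_map.comp continuous_fst)
            (Completion.continuous_map.comp continuous_snd)))
        fun b c => ?_
      show Completion.map star
          (((b : q.Carrier) : Completion q.Carrier) + ((c : q.Carrier) : Completion q.Carrier))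
        = Completion.map star ((b : q.Carrier) : Completion q.Carrier) +
          Completion.map star ((c : q.Carrier) : Completion q.Carrier)
      rw [← Completion.coe_add, Completion.map_coe q.uniformContinuous_star,
        Completion.map_coe q.uniformContinuous_star,
        Completion.map_coe q.uniformContinuous_star, star_add, Completion.coe_add] }

lemma CSN.star_coe (b : q.Carrier) :
    (star (b : Completion q.Carrier)) = ((star b : q.Carrier) : Completion q.Carrier) :=
  Completion.map_coe q.uniformContinuous_star b

lemma CSN.continuous_star' :
    Continuous (star : Completion q.Carrier → Completion q.Carrier) :=
  Completion.continuous_map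

noncomputable instance : CStarRing (Completion q.Carrier) where
  norm_mul_self_le x := by
    refine Completion.induction_on x
      (isClosed_le (continuous_norm.mul continuous_norm)
        (continuous_norm.comp ((q.continuous_star').mul continuous_id)))
      fun b => ?_
    rw [q.star_coe, ← Completion.coe_mul, Completion.norm_coe, Completion.norm_coe]
    rw [q.norm_def, q.norm_def, ← sq]
    exact le_of_eq (q.cstar b).symm

noncomputable instance : NormedAlgebra ℂ (Completion q.Carrier) :=
  { (inferInstanceAs (Algebra ℂ (Completion q.Carrier)) : Algebra ℂ (Completion q.Carrier)) with
    norm_smul_le := fun c x => norm_smul_le c x }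

/-- The canonical algebra homomorphism from `A` to the completion C*-algebra. -/
noncomputable def CSN.hom : A →ₐ[ℂ] Completion q.Carrier :=
  { (Completion.coeRingHom : q.Carrier →+* Completion q.Carrier) with
    commutes' := fun _ => rfl }

lemma CSN.hom_apply (a : q.Carrier) : q.hom a = (a : Completion q.Carrier) := rfl

section Gelfand

open ENNReal

theorem selfadj_spectralRadius_eq_nnnorm {B : Type*} [NormedRing B] [StarRing B] [CStarRing B]
    [NormedAlgebra ℂ B] [CompleteSpace B] {b : B} (hb : IsSelfAdjoint b) :
    spectralRadius ℂ b = ‖b‖₊ := by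
  have hconst : Tendsto (fun _n : ℕ => (‖b‖₊ : ℝ≥0∞)) atTop _ := tendsto_const_nhds
  refine tendsto_nhds_unique ?_ hconst
  convert
    (spectrum.pow_nnnorm_pow_one_div_tendsto_nhds_spectralRadius (b : B)).comp
      (tendsto_pow_atTop_atTop_of_one_lt one_lt_two) using 1
  refine funext fun n => ?_
  rw [Function.comp_apply, hb.nnnorm_pow_two_pow, ENNReal.coe_pow, ← rpow_natCast, ← rpow_mul]
  simp

theorem normal_spectralRadius_eq_nnnorm {B : Type*} [NormedRing B] [StarRing B] [CStarRing B]
    [NormedAlgebra ℂ B] [CompleteSpace B] (b : B) (hb : star b * b = b * star b) :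
    spectralRadius ℂ b = ‖b‖₊ := by
  have hb' : Commute (star b) b := hb
  refine (ENNReal.pow_right_strictMono two_ne_zero).injective ?_
  have heq :
    (fun n : ℕ => ((‖(star b * b) ^ n‖₊ : ℝ≥0∞)) ^ (1 / n : ℝ)) =
      (fun x => x ^ 2) ∘ fun n : ℕ => ((‖b ^ n‖₊ : ℝ≥0∞)) ^ (1 / n : ℝ) := by
    funext n
    rw [Function.comp_apply, ← rpow_natCast, ← rpow_mul, mul_comm, rpow_mul, rpow_natCast, ←
      coe_pow, sq, ← CStarRing.nnnorm_star_mul_self, hb'.mul_pow, star_pow]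
  have h₂ :=
    ((ENNReal.continuous_pow 2).tendsto (spectralRadius ℂ b)).comp
      (spectrum.pow_nnnorm_pow_one_div_tendsto_nhds_spectralRadius b)
  rw [← heq] at h₂
  convert tendsto_nhds_unique h₂
    (spectrum.pow_nnnorm_pow_one_div_tendsto_nhds_spectralRadius (star b * b))
  rw [selfadj_spectralRadius_eq_nnnorm (IsSelfAdjoint.star_mul_self b), sq,
    CStarRing.nnnorm_star_mul_self, coe_mul]

end Gelfand

theorem CSN.ofReal_p_le (a : A) (ha : star a * a = a * star a) :
    ENNReal.ofReal (q.p a) ≤ spectralRadius ℂ a := by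
  have h' : (star a * a : q.Carrier) = (a * star a : q.Carrier) := ha
  have hnormal : star (q.hom a) * q.hom a = q.hom a * star (q.hom a) := by
    erw [q.hom_apply, q.star_coe, ← Completion.coe_mul, ← Completion.coe_mul, h']
    rfl
  have hnorm : ENNReal.ofReal (q.p a) = (‖q.hom a‖₊ : ℝ≥0∞) := by
    erw [← ENNReal.ofReal_coe_nnreal, coe_nnnorm, q.hom_apply, Completion.norm_coe, q.norm_def]
  rw [hnorm, ← normal_spectralRadius_eq_nnnorm _ hnormal]
  have hsub := AlgHom.spectrum_apply_subset q.hom a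
  refine iSup₂_le fun k hk => ?_
  exact le_iSup₂_of_le k (hsub hk) le_rfl

end Stmt12Aux

section Neumann

open Filter Topology Stmt12Aux

variable {A : Type*} [UniformSpace A] [Ring A] [StarRing A] [Algebra ℂ A] [ProCStarAlgebra A]

theorem nnnorm_le_uniformNorm (a : A) {lam : ℂ} (hlam : lam ∈ spectrum ℂ a) :
    (‖lam‖₊ : ℝ≥0∞) ≤ uniformNorm A a := by
  by_contra hcon
  push_neg at hcon
  haveI := ProCStarAlgebra.t2 (A := A)
  haveI := ProCStarAlgebra.complete (A := A)
  haveI := ProCStarAlgebra.topologicalRing (A := A)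
  haveI := ProCStarAlgebra.uniformAddGroup (A := A)
  have hlam0 : lam ≠ 0 := by
    rintro rfl
    simp at hcon
  have hL : (0:ℝ) < ‖lam‖ := norm_pos_iff.mpr hlam0
  have hplt : ∀ p ∈ contCStarSeminorms A, p a < ‖lam‖ := by
    intro p hp
    have h1 : ENNReal.ofReal (p a) ≤ uniformNorm A a :=
      le_iSup₂ (f := fun p (_ : p ∈ contCStarSeminorms A) => ENNReal.ofReal (p a)) p hp
    have h2 : ENNReal.ofReal (p a) < ENNReal.ofReal ‖lam‖ := by
      rw [ofReal_norm]
      exact lt_of_le_of_lt h1 hcon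
    exact (ENNReal.ofReal_lt_ofReal_iff hL).mp h2
  set u : A := algebraMap ℂ A lam - a with hu
  set f : ℕ → A := fun n => (lam⁻¹ ^ (n + 1)) • a ^ n with hf
  set S : ℕ → A := fun N => ∑ n ∈ Finset.range N, f n with hS
  -- mk a CSN from a continuous C* seminorm
  have mkq : ∀ p ∈ contCStarSeminorms A, ∃ q : CSN A, q.p = p := by
    intro p hp
    exact ⟨⟨p, hp.1.1, hp.1.2.1, hp.1.2.2.1, hp.1.2.2.2.1, hp.1.2.2.2.2⟩, rfl⟩
  -- term bound
  have hterm : ∀ p ∈ contCStarSeminorms A, ∀ n : ℕ,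
      p (f n) ≤ ‖lam‖⁻¹ * (p a / ‖lam‖) ^ n := by
    intro p hp n
    obtain ⟨q, rfl⟩ := mkq p hp
    have hs : q.p (f n) = ‖lam‖⁻¹ ^ (n + 1) * q.p (a ^ n) := by
      rw [hf]
      simp only []
      rw [q.smul_eq, norm_pow, norm_inv]
    rw [hs]
    rcases Nat.eq_zero_or_pos n with rfl | hn
    · simpa using mul_le_of_le_one_right (by positivity) q.p_one_le
    · have hpow := q.p_pow_le a n hn
      have h1 : (q.p a / ‖lam‖) ^ n = q.p a ^ n * (‖lam‖⁻¹) ^ n := by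
        rw [div_eq_mul_inv, mul_pow]
      rw [h1, pow_succ]
      calc ‖lam‖⁻¹ ^ n * ‖lam‖⁻¹ * q.p (a ^ n)
          ≤ ‖lam‖⁻¹ ^ n * ‖lam‖⁻¹ * q.p a ^ n := by
            have : (0:ℝ) ≤ ‖lam‖⁻¹ ^ n * ‖lam‖⁻¹ := by positivity
            nlinarith
        _ = ‖lam‖⁻¹ * (q.p a ^ n * ‖lam‖⁻¹ ^ n) := by ring
  -- Cauchy
  have hcauchy : CauchySeq S := by
    rw [cauchySeq_iff]
    intro V hV
    rw [uniformity_eq_comap_nhds_zero A] at hV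
    obtain ⟨t, ht, htV⟩ := hV
    obtain ⟨p, hp, ε, hε, hball⟩ := (ProCStarAlgebra.mem_nhds_zero t).mp ht
    set r : ℝ := p a / ‖lam‖ with hr
    have hr0 : 0 ≤ r := div_nonneg (hp.1.1 a) hL.le
    have hr1 : r < 1 := (div_lt_one hL).mpr (hplt p hp)
    have hsum : Summable (fun n : ℕ => ‖lam‖⁻¹ * r ^ n) :=
      (summable_geometric_of_lt_one hr0 hr1).mul_left _
    set T : ℕ → ℝ := fun N => ∑ n ∈ Finset.range N, ‖lam‖⁻¹ * r ^ n with hT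
    have hTc : CauchySeq T := hsum.hasSum.tendsto_sum_nat.cauchySeq
    obtain ⟨N, hN⟩ := Metric.cauchySeq_iff.mp hTc ε hε
    refine ⟨N, fun k hk l hl => ?_⟩
    apply htV
    show S l - S k ∈ t
    apply hball
    obtain ⟨q, rfl⟩ := mkq p hp
    have key : ∀ m m', N ≤ m → N ≤ m' → m ≤ m' → q.p (S m' - S m) < ε := by
      intro m m' hm hm' hmm
      have hIco : S m' - S m = ∑ n ∈ Finset.Ico m m', f n := by
        rw [hS]
        simp only []
        rw [Finset.sum_Ico_eq_sub _ hmm]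
      rw [hIco]
      calc q.p (∑ n ∈ Finset.Ico m m', f n) ≤ ∑ n ∈ Finset.Ico m m', q.p (f n) :=
            q.p_sum_le _ _
        _ ≤ ∑ n ∈ Finset.Ico m m', ‖lam‖⁻¹ * r ^ n :=
            Finset.sum_le_sum fun n _ => hterm q.p hp n
        _ = T m' - T m := (Finset.sum_Ico_eq_sub _ hmm)
        _ ≤ |T m - T m'| := by rw [abs_sub_comm]; exact le_abs_self _
        _ = dist (T m) (T m') := (Real.dist_eq _ _).symm
        _ < ε := hN m hm m' hm'
    show q.p (S l - S k) < ε
    rcases le_total k l with h | h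
    · exact key k l hk hl h
    · rw [← q.p_neg, neg_sub]
      exact key l k hl hk h
  obtain ⟨x, hx⟩ := cauchySeq_tendsto_of_complete hcauchy
  -- telescoping identity
  have hsc : ∀ N : ℕ, lam * lam⁻¹ ^ (N + 1) = lam⁻¹ ^ N := by
    intro N
    rw [pow_succ']
    rw [← mul_assoc, mul_inv_cancel₀ hlam0, one_mul]
  have htel : ∀ N : ℕ, u * S N = 1 - (lam⁻¹ ^ N) • a ^ N := by
    intro N
    induction N with
    | zero => simp [hS]
    | succ N ih =>
      have hSN : S (N + 1) = S N + f N := by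
        rw [hS]; simp only []; rw [Finset.sum_range_succ]
      have hstep : u * f N = (lam⁻¹ ^ N) • a ^ N - (lam⁻¹ ^ (N + 1)) • a ^ (N + 1) := by
        rw [hu, hf]
        simp only []
        rw [sub_mul, Algebra.algebraMap_eq_smul_one, smul_mul_assoc, one_mul,
          mul_smul_comm, smul_smul, hsc N, ← pow_succ']
      rw [hSN, mul_add, ih, hstep]
      abel
  have hcomm : ∀ N : ℕ, u * S N = S N * u := by
    intro N
    have h1 : Commute u (S N) := by
      rw [hu]
      refine Commute.sub_left (Algebra.commute_algebraMap_left lam (S N)) ?_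
      rw [hS]
      simp only []
      refine Finset.sum_induction f (fun y => Commute a y)
        (fun y z hy hz => hy.add_right hz) (Commute.zero_right a) fun n _ => ?_
      rw [hf]
      simp only []
      exact ((Commute.refl a).pow_right n).smul_right _
    exact h1
  -- tendsto of remainder
  have hg : Tendsto (fun N : ℕ => (lam⁻¹ ^ N) • a ^ N) atTop (𝓝 (0 : A)) := by
    refine Filter.tendsto_def.mpr fun s hs => ?_
    obtain ⟨p, hp, ε, hε, hball⟩ := (ProCStarAlgebra.mem_nhds_zero s).mp hs
    obtain ⟨q, rfl⟩ := mkq p hp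
    set r : ℝ := q.p a / ‖lam‖ with hr
    have hr0 : 0 ≤ r := div_nonneg (q.nonneg a) hL.le
    have hr1 : r < 1 := (div_lt_one hL).mpr (hplt q.p hp)
    have hrt : Tendsto (fun n : ℕ => r ^ n) atTop (𝓝 0) :=
      tendsto_pow_atTop_nhds_zero_of_lt_one hr0 hr1
    have hev : ∀ᶠ n : ℕ in atTop, r ^ n < ε := by
      have := hrt.eventually (gt_mem_nhds hε)
      exact this
    have hev2 : ∀ᶠ n : ℕ in atTop, (lam⁻¹ ^ n) • a ^ n ∈ s := by
      filter_upwards [hev, Filter.eventually_ge_atTop 1] with n hn hn1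
      apply hball
      show q.p ((lam⁻¹ ^ n) • a ^ n) < ε
      have h1 : q.p ((lam⁻¹ ^ n) • a ^ n) = ‖lam‖⁻¹ ^ n * q.p (a ^ n) := by
        rw [q.smul_eq, norm_pow, norm_inv]
      have h2 : q.p (a ^ n) ≤ q.p a ^ n := q.p_pow_le a n hn1
      have h3 : ‖lam‖⁻¹ ^ n * q.p (a ^ n) ≤ r ^ n := by
        have hre : r ^ n = q.p a ^ n * ‖lam‖⁻¹ ^ n := by
          rw [hr, div_eq_mul_inv, mul_pow]
        rw [hre]
        have h4 : (0:ℝ) ≤ ‖lam‖⁻¹ ^ n := by positivity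
        nlinarith
      linarith [h1 ▸ h3]
    exact hev2
  -- conclude
  have h1 : Tendsto (fun N => u * S N) atTop (𝓝 (u * x)) := tendsto_const_nhds.mul hx
  have h2 : Tendsto (fun N => u * S N) atTop (𝓝 (1 : A)) := by
    simp only [htel]
    have h0 : Tendsto (fun _ : ℕ => (1 : A)) atTop (𝓝 (1 : A)) := tendsto_const_nhds
    simpa using h0.sub hg
  have hux : u * x = 1 := tendsto_nhds_unique h1 h2
  have h1' : Tendsto (fun N => S N * u) atTop (𝓝 (x * u)) := hx.mul tendsto_const_nhds
  have h2' : Tendsto (fun N => S N * u) atTop (𝓝 (1 : A)) := by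
    have : (fun N => S N * u) = fun N => u * S N := by
      funext N; exact (hcomm N).symm
    rw [this]; exact h2
  have hxu : x * u = 1 := tendsto_nhds_unique h1' h2'
  exact absurd (⟨⟨u, x, hux, hxu⟩, rfl⟩ : IsUnit u) (spectrum.mem_iff.mp hlam)

end Neumann

/-- For a normal element `a` of a unital pro-C*-algebra `A`,
`‖a‖_∞ = r_A(a)` in `[0,∞]`, where `r_A(a)` is the spectral radius.  In particular, a
normal element is bounded iff it is spectrally bounded. -/
theorem stmt12 {A : Type*} [UniformSpace A] [Ring A] [StarRing A] [Algebra ℂ A]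
    [ProCStarAlgebra A] (a : A) (ha : star a * a = a * star a) :
    uniformNorm A a = spectralRadius ℂ a ∧
    (uniformNorm A a < ⊤ ↔ spectralRadius ℂ a < ⊤) := by
  have h1 : uniformNorm A a ≤ spectralRadius ℂ a := by
    rw [uniformNorm]
    refine iSup₂_le fun p hp => ?_
    exact Stmt12Aux.CSN.ofReal_p_le
      ⟨p, hp.1.1, hp.1.2.1, hp.1.2.2.1, hp.1.2.2.2.1, hp.1.2.2.2.2⟩ a ha
  have h2 : spectralRadius ℂ a ≤ uniformNorm A a := by
    rw [spectralRadius]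
    exact iSup₂_le fun k hk => nnnorm_le_uniformNorm a hk
  have h := le_antisymm h1 h2
  exact ⟨h, by rw [h]⟩
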